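/- Let γ₁ = (0 1; -1 1) and γ₂ = (1 -1; 1 0) in SL(2,ℤ), let F = {τ ∈ ℍ : 0 ≤ Re τ ≤ 1, |τ| ≥ 1, |τ-1| > 1} ∪ {e^{πi/3}}, and let F₀ = {τ ∈ ℍ : 0 ≤ Re τ ≤ 1, |τ - 1/2| ≥ 1/2}. Then F₀ = F ∪ γ₁(F) ∪ γ₂(F), where γ·τ = (aτ+b)/(cτ+d). -/

import Mathlib

noncomputable section
open scoped Real
open Complex

/-- The fundamental domain `F` of `SL(2,ℤ)`:
`{τ ∈ ℍ : 0 ≤ Re τ ≤ 1, |τ| ≥ 1, |τ-1| > 1} ∪ {e^{πi/3}}`. -/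
def Fdom : Set ℂ :=
  {τ : ℂ | 0 < τ.im ∧ 0 ≤ τ.re ∧ τ.re ≤ 1 ∧ 1 ≤ ‖τ‖ ∧ 1 < ‖τ - 1‖} ∪
    {Complex.exp ((π : ℂ) * Complex.I / 3)}

/-- The basic fundamental domain `F₀` of `Γ₀(2)`:
`{τ ∈ ℍ : 0 ≤ Re τ ≤ 1, |τ - 1/2| ≥ 1/2}`. -/
def F0dom : Set ℂ :=
  {τ : ℂ | 0 < τ.im ∧ 0 ≤ τ.re ∧ τ.re ≤ 1 ∧ 1 / 2 ≤ ‖τ - 1 / 2‖}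

/-- `ρ = e^{πi/3} = 1/2 + (√3/2) i`. -/
def rho : ℂ := Complex.ofReal (1/2) + Complex.ofReal (Real.sqrt 3 / 2) * Complex.I

lemma rho_re : rho.re = 1/2 := by simp [rho]
lemma rho_im : rho.im = Real.sqrt 3 / 2 := by simp [rho]
lemma sqrt3_sq : Real.sqrt 3 ^ 2 = 3 := Real.sq_sqrt (by norm_num)
lemma sqrt3_pos : 0 < Real.sqrt 3 := Real.sqrt_pos.2 (by norm_num)

lemma exp_eq_rho : Complex.exp ((π : ℂ) * Complex.I / 3) = rho := by
  have h : (π : ℂ) * Complex.I / 3 = ((π/3 : ℝ) : ℂ) * Complex.I := by push_cast; ring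
  rw [h, Complex.exp_mul_I, ← Complex.ofReal_cos, ← Complex.ofReal_sin,
    Real.cos_pi_div_three, Real.sin_pi_div_three, rho]

lemma one_le_abs_iff' (z : ℂ) : 1 ≤ ‖z‖ ↔ 1 ≤ Complex.normSq z := by
  rw [Complex.norm_def, Real.one_le_sqrt]

lemma one_lt_abs_iff' (z : ℂ) : 1 < ‖z‖ ↔ 1 < Complex.normSq z := by
  rw [Complex.norm_def, Real.lt_sqrt (by norm_num)]; norm_num

lemma half_le_abs_iff' (z : ℂ) :
    1 / 2 ≤ ‖z - 1/2‖ ↔ z.re ≤ Complex.normSq z := by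
  rw [Complex.norm_def, Real.le_sqrt (by norm_num) (Complex.normSq_nonneg _)]
  have h : Complex.normSq (z - 1/2) = Complex.normSq z - z.re + 1/4 := by
    simp only [Complex.normSq_apply, Complex.sub_re, Complex.sub_im]
    norm_num; ring
  rw [h]; constructor <;> intro <;> linarith

lemma normSq_sub_one' (z : ℂ) :
    Complex.normSq (z - 1) = Complex.normSq z - 2*z.re + 1 := by
  simp only [Complex.normSq_apply, Complex.sub_re, Complex.sub_im, Complex.one_re,
    Complex.one_im]
  ring

lemma normSq_one_sub' (z : ℂ) :
    Complex.normSq (1 - z) = Complex.normSq z - 2*z.re + 1 := by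
  rw [show (1 : ℂ) - z = -(z - 1) by ring, Complex.normSq_neg, normSq_sub_one']

lemma rho_sq : rho ^ 2 = rho - 1 := by
  have h3 := sqrt3_sq
  apply Complex.ext <;>
    simp only [pow_two, Complex.mul_re, Complex.mul_im, Complex.sub_re, Complex.sub_im,
      Complex.one_re, Complex.one_im, rho_re, rho_im] <;> nlinarith [h3]

lemma rho_ne_zero : rho ≠ 0 := by
  intro h
  have := rho_im
  rw [h] at this
  simp only [Complex.zero_im] at this
  nlinarith [sqrt3_pos]

lemma one_sub_rho_ne_zero : (1 : ℂ) - rho ≠ 0 := by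
  intro h
  have h2 : ((1:ℂ) - rho).im = 0 := by rw [h]; simp
  rw [Complex.sub_im, Complex.one_im, rho_im] at h2
  nlinarith [sqrt3_pos]

lemma gamma1_rho : 1 / (1 - rho) = rho := by
  rw [div_eq_iff one_sub_rho_ne_zero]
  linear_combination rho_sq

lemma gamma2_rho : (rho - 1) / rho = rho := by
  rw [div_eq_iff rho_ne_zero]
  linear_combination -rho_sq

lemma normSq_rho : Complex.normSq rho = 1 := by
  simp only [Complex.normSq_apply, rho_re, rho_im]
  nlinarith [sqrt3_sq]

/-- `F₀ = F ∪ γ₁(F) ∪ γ₂(F)`, where `γ₁ = (0 1; -1 1)` acts by `τ ↦ 1/(1-τ)` and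
`γ₂ = (1 -1; 1 0)` acts by `τ ↦ (τ-1)/τ`. -/
theorem stmt_16 :
    F0dom = Fdom ∪ (fun τ : ℂ => 1 / (1 - τ)) '' Fdom ∪ (fun τ : ℂ => (τ - 1) / τ) '' Fdom := by
  ext z
  simp only [F0dom, Fdom, Set.mem_union, Set.mem_setOf_eq, Set.mem_singleton_iff,
    Set.mem_image, exp_eq_rho, one_le_abs_iff', one_lt_abs_iff', half_le_abs_iff']
  constructor
  · rintro ⟨hy, hx0, hx1, hnx⟩
    have hz0 : z ≠ 0 := by intro h; rw [h] at hy; simp at hy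
    have hz1 : z ≠ 1 := by intro h; rw [h] at hy; simp at hy
    have hnpos : 0 < Complex.normSq z := Complex.normSq_pos.2 hz0
    by_cases hF : 1 ≤ Complex.normSq z ∧ 2 * z.re < Complex.normSq z
    · exact Or.inl (Or.inl (Or.inl ⟨hy, hx0, hx1, hF.1, by rw [normSq_sub_one']; linarith [hF.2]⟩))
    push_neg at hF
    by_cases hx : z.re ≤ 1/2
    · by_cases hn1 : Complex.normSq z < 1
      · -- z ∈ γ₁(F), witness 1 - 1/z
        refine Or.inl (Or.inr ⟨1 - 1/z, Or.inl ⟨?_, ?_, ?_, ?_, ?_⟩, ?_⟩)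
        · rw [Complex.sub_im, Complex.one_im, one_div, Complex.inv_im]
          have : 0 - -z.im / Complex.normSq z = z.im / Complex.normSq z := by ring
          rw [this]
          exact div_pos hy hnpos
        · rw [Complex.sub_re, Complex.one_re, one_div, Complex.inv_re, sub_nonneg,
            div_le_one hnpos]
          exact hnx
        · rw [Complex.sub_re, Complex.one_re, one_div, Complex.inv_re]
          have : 0 ≤ z.re / Complex.normSq z := div_nonneg hx0 hnpos.le
          linarith
        · have hrw : (1 : ℂ) - 1/z = (z - 1)/z := by field_simp
          rw [hrw, map_div₀, normSq_sub_one', le_div_iff₀ hnpos]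
          linarith
        · have hrw : (1 : ℂ) - 1/z - 1 = -(1/z) := by ring
          rw [hrw, Complex.normSq_neg, one_div, map_inv₀, inv_eq_one_div, lt_div_iff₀ hnpos]
          linarith
        · show 1 / (1 - (1 - 1/z)) = z
          field_simp
          ring
      · -- z = ρ
        push_neg at hn1
        have h2x := hF hn1
        have hne : Complex.normSq z = 1 := le_antisymm (by linarith) hn1
        have hxe : z.re = 1/2 := le_antisymm hx (by linarith)
        have hnn := Complex.normSq_apply z
        rw [hxe, hne] at hnn
        have hysq : z.im * z.im = 3/4 := by linarith
        have hyv : z.im = Real.sqrt 3 / 2 := by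
          have h1 : z.im = Real.sqrt (z.im ^ 2) := (Real.sqrt_sq hy.le).symm
          have h2 : z.im ^ 2 = (Real.sqrt 3 / 2) ^ 2 := by
            rw [div_pow, sqrt3_sq, pow_two]; linarith
          rw [h1, h2, Real.sqrt_sq (by positivity)]
        exact Or.inl (Or.inl (Or.inr (Complex.ext (by rw [hxe, rho_re]) (by rw [hyv, rho_im]))))
    · -- z ∈ γ₂(F), witness 1/(1-z)
      push_neg at hx
      have h1z : (1 : ℂ) - z ≠ 0 := sub_ne_zero.2 (Ne.symm hz1)
      have hmpos : 0 < Complex.normSq (1 - z) := Complex.normSq_pos.2 h1z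
      have hmval : Complex.normSq (1 - z) = Complex.normSq z - 2*z.re + 1 := normSq_one_sub' z
      have hmle : Complex.normSq (1 - z) ≤ 1 := by
        rcases lt_or_ge (Complex.normSq z) 1 with h | h
        · rw [hmval]; linarith
        · have := hF h; rw [hmval]; linarith
      refine Or.inr ⟨1/(1-z), Or.inl ⟨?_, ?_, ?_, ?_, ?_⟩, ?_⟩
      · rw [one_div, Complex.inv_im]
        have hrw : -(1-z).im / Complex.normSq (1-z) = z.im / Complex.normSq (1-z) := by
          rw [Complex.sub_im, Complex.one_im]; ring
        rw [hrw]
        exact div_pos hy hmpos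
      · rw [one_div, Complex.inv_re]
        apply div_nonneg _ hmpos.le
        rw [Complex.sub_re, Complex.one_re]; linarith
      · rw [one_div, Complex.inv_re, div_le_one hmpos, Complex.sub_re, Complex.one_re, hmval]
        linarith
      · rw [one_div, map_inv₀, inv_eq_one_div, le_div_iff₀ hmpos]
        linarith
      · have hrw : 1/(1-z) - 1 = z/(1-z) := by field_simp; ring
        rw [hrw, map_div₀, lt_div_iff₀ hmpos, hmval]
        linarith
      · show (1/(1-z) - 1) / (1/(1-z)) = z
        field_simp
        ring
  · rintro (((⟨hy, hx0, hx1, hab, hab1⟩ | rfl) | ⟨τ, hτ | rfl, rfl⟩) | ⟨τ, hτ | rfl, rfl⟩)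
    · -- F ⊆ F₀
      exact ⟨hy, hx0, hx1, by linarith⟩
    · -- ρ ∈ F₀
      refine ⟨?_, ?_, ?_, ?_⟩
      · rw [rho_im]; positivity
      · rw [rho_re]; norm_num
      · rw [rho_re]; norm_num
      · rw [rho_re, normSq_rho]; norm_num
    · -- γ₁ of the main piece
      obtain ⟨hy, hx0, hx1, hab, hab1⟩ := hτ
      rw [normSq_sub_one'] at hab1
      have hτ1 : (1 : ℂ) - τ ≠ 0 := by
        intro h
        have h2 : ((1:ℂ) - τ).im = 0 := by rw [h]; simp
        rw [Complex.sub_im, Complex.one_im] at h2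
        linarith
      have hmpos : 0 < Complex.normSq (1 - τ) := Complex.normSq_pos.2 hτ1
      have hmval : Complex.normSq (1 - τ) = Complex.normSq τ - 2*τ.re + 1 := normSq_one_sub' τ
      have hm1 : 1 < Complex.normSq (1 - τ) := by rw [hmval]; linarith
      have hnsval : Complex.normSq (1/(1-τ)) = 1 / Complex.normSq (1-τ) := by
        rw [one_div, map_inv₀, inv_eq_one_div]
      have hreval : (1/(1-τ)).re = (1 - τ.re) / Complex.normSq (1-τ) := by
        rw [one_div, Complex.inv_re, Complex.sub_re, Complex.one_re]
      refine ⟨?_, ?_, ?_, ?_⟩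
      · rw [one_div, Complex.inv_im]
        have hrw : -(1-τ).im / Complex.normSq (1-τ) = τ.im / Complex.normSq (1-τ) := by
          rw [Complex.sub_im, Complex.one_im]; ring
        rw [hrw]
        exact div_pos hy hmpos
      · rw [hreval]
        exact div_nonneg (by linarith) hmpos.le
      · rw [hreval, div_le_one hmpos]
        linarith
      · rw [hreval, hnsval, div_le_div_iff₀ hmpos hmpos]
        nlinarith [hmpos]
    · -- γ₁ ρ = ρ
      rw [gamma1_rho]
      refine ⟨?_, ?_, ?_, ?_⟩
      · rw [rho_im]; positivity
      · rw [rho_re]; norm_num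
      · rw [rho_re]; norm_num
      · rw [rho_re, normSq_rho]; norm_num
    · -- γ₂ of the main piece
      obtain ⟨hy, hx0, hx1, hab, hab1⟩ := hτ
      rw [normSq_sub_one'] at hab1
      have hτ0 : τ ≠ 0 := by intro h; rw [h] at hy; simp at hy
      have hqpos : 0 < Complex.normSq τ := Complex.normSq_pos.2 hτ0
      have hrw : (τ - 1)/τ = 1 - 1/τ := by field_simp
      have hreval : ((τ - 1)/τ).re = 1 - τ.re / Complex.normSq τ := by
        rw [hrw, Complex.sub_re, Complex.one_re, one_div, Complex.inv_re]
      have hnsval : Complex.normSq ((τ - 1)/τ) =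
          (Complex.normSq τ - 2*τ.re + 1) / Complex.normSq τ := by
        rw [map_div₀, normSq_sub_one']
      refine ⟨?_, ?_, ?_, ?_⟩
      · show 0 < ((τ - 1)/τ).im
        rw [hrw, Complex.sub_im, Complex.one_im, one_div, Complex.inv_im]
        have : 0 - -τ.im / Complex.normSq τ = τ.im / Complex.normSq τ := by ring
        rw [this]
        exact div_pos hy hqpos
      · rw [hreval, sub_nonneg, div_le_one hqpos]
        linarith
      · rw [hreval]
        have : 0 ≤ τ.re / Complex.normSq τ := div_nonneg hx0 hqpos.le
        linarith
      · rw [hreval, hnsval]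
        rw [show 1 - τ.re / Complex.normSq τ
            = (Complex.normSq τ - τ.re) / Complex.normSq τ by field_simp]
        rw [div_le_div_iff₀ hqpos hqpos]
        nlinarith [hqpos]
    · -- γ₂ ρ = ρ
      rw [gamma2_rho]
      refine ⟨?_, ?_, ?_, ?_⟩
      · rw [rho_im]; positivity
      · rw [rho_re]; norm_num
      · rw [rho_re]; norm_num
      · rw [rho_re, normSq_rho]; norm_num
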